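/- Let I ⊆ ℝ be an open interval and let ρ̃ : ℝ³ × I → ℝ, u : ℝ³ × I → ℝ³ and 𝔽 : ℝ³ × I → M₃(ℝ) be smooth functions satisfying pointwise ∂_t ρ̃ + u·∇ρ̃ = 0 and ∂_t 𝔽 + u·∇𝔽 = (∇u)𝔽. Then the matrix-valued function G := ρ̃ 𝔽 𝔽ᵀ − I satisfies pointwise ∂_t G + u·∇G − (∇u)G − G(∇u)ᵀ = ∇u + (∇u)ᵀ. -/

import Mathlib

open MeasureTheory FourierTransform

noncomputable section

/-- Points of physical space `ℝ³`. -/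
abbrev E3 : Type := EuclideanSpace ℝ (Fin 3)

/-- The partial derivative `∂f/∂x_k` of a scalar field on `ℝ³`. -/
def pd (k : Fin 3) (f : E3 → ℝ) : E3 → ℝ :=
  fun x => fderiv ℝ f x (EuclideanSpace.single k 1)

/-- The iterated partial derivative `∂^α f = ∂₀^a ∂₁^b ∂₂^c f`. -/
def pdIter (a b c : ℕ) (f : E3 → ℝ) : E3 → ℝ :=
  (pd 0)^[a] ((pd 1)^[b] ((pd 2)^[c] f))

/-- Multi-indices `α` on `ℝ³` with `|α| ≤ m`. -/
def idxLe (m : ℕ) : Finset (ℕ × ℕ × ℕ) :=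
  (Finset.range (m + 1) ×ˢ Finset.range (m + 1) ×ˢ Finset.range (m + 1)).filter
    (fun α => α.1 + α.2.1 + α.2.2 ≤ m)

/-- Multi-indices `α` on `ℝ³` with `1 ≤ |α| ≤ m + 1`. -/
def idxGrad (m : ℕ) : Finset (ℕ × ℕ × ℕ) :=
  (Finset.range (m + 2) ×ˢ Finset.range (m + 2) ×ˢ Finset.range (m + 2)).filter
    (fun α => 1 ≤ α.1 + α.2.1 + α.2.2 ∧ α.1 + α.2.1 + α.2.2 ≤ m + 1)

/-- The squared `Hᵐ` norm of a scalar field: `Σ_{|α|≤m} ‖∂^α f‖²_{L²}`. -/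
def sobSq (m : ℕ) (f : E3 → ℝ) : ℝ :=
  ∑ α ∈ idxLe m, ∫ x : E3, (pdIter α.1 α.2.1 α.2.2 f x) ^ 2

/-- The squared `Hᵐ` norm of the gradient of a scalar field:
`‖∇f‖²_{Hᵐ} = Σ_{1≤|α|≤m+1} ‖∂^α f‖²_{L²}`. -/
def gradSobSq (m : ℕ) (f : E3 → ℝ) : ℝ :=
  ∑ α ∈ idxGrad m, ∫ x : E3, (pdIter α.1 α.2.1 α.2.2 f x) ^ 2

/-- The squared `Hᵐ` norm of a vector field (summing over components). -/
def sobSqVec (m : ℕ) (u : E3 → Fin 3 → ℝ) : ℝ :=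
  ∑ i, sobSq m (fun x => u x i)

/-- The squared `Hᵐ` norm of the gradient of a vector field (summing over components). -/
def gradSobSqVec (m : ℕ) (u : E3 → Fin 3 → ℝ) : ℝ :=
  ∑ i, gradSobSq m (fun x => u x i)

/-- The squared `Hᵐ` norm of a matrix field (summing over components). -/
def sobSqMat (m : ℕ) (M : E3 → Fin 3 → Fin 3 → ℝ) : ℝ :=
  ∑ i, ∑ j, sobSq m (fun x => M x i j)

/-- `f : ℝ³ → ℝ` is a Schwartz function. -/
def IsSchwartz (f : E3 → ℝ) : Prop :=
  ContDiff ℝ (⊤ : ℕ∞) f ∧ ∀ k n : ℕ, ∃ C : ℝ, ∀ x, ‖x‖ ^ k * ‖iteratedFDeriv ℝ n f x‖ ≤ C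

/-- The operator `Λ^s f := 𝓕⁻¹(|ξ|^s 𝓕 f)` on scalar fields. -/
def lam (s : ℝ) (f : E3 → ℝ) : E3 → ℝ := fun x =>
  (𝓕⁻ (fun ξ : E3 => (‖ξ‖ ^ s : ℝ) • 𝓕 (fun y => (f y : ℂ)) ξ) x).re

/-- `‖Λh‖²_{Hᵐ} = Σ_{k=0}^{m} ‖Λ^{k+1} h‖²_{L²}` for a vector field `h`
(summing over components). -/
def lamSobSqVec (m : ℕ) (u : E3 → Fin 3 → ℝ) : ℝ :=
  ∑ k ∈ Finset.range (m + 1), ∑ i, ∫ x : E3, (lam ((k : ℝ) + 1) (fun y => u y i) x) ^ 2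


private lemma pd_mul (f g : E3 → ℝ) (x : E3) (k : Fin 3)
    (hf : DifferentiableAt ℝ f x) (hg : DifferentiableAt ℝ g x) :
    pd k (fun y => f y * g y) x = pd k f x * g x + f x * pd k g x := by
  unfold pd
  rw [fderiv_fun_mul hf hg]
  simp only [ContinuousLinearMap.add_apply, ContinuousLinearMap.smul_apply, smul_eq_mul]
  ring

private lemma pd_sum {ι : Type*} (s : Finset ι) (f : ι → E3 → ℝ) (x : E3) (k : Fin 3)
    (hf : ∀ i ∈ s, DifferentiableAt ℝ (f i) x) :
    pd k (fun y => ∑ i ∈ s, f i y) x = ∑ i ∈ s, pd k (f i) x := by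
  unfold pd
  rw [fderiv_fun_sum hf]
  simp

private lemma pd_sub_const (f : E3 → ℝ) (c : ℝ) (x : E3) (k : Fin 3) :
    pd k (fun y => f y - c) x = pd k f x := by
  unfold pd
  rw [fderiv_sub_const]

/-- Derivation of the evolution equation (2.3) for the effective tensor
`G := ρ̃𝔽𝔽ᵀ − I`: if `∂_tρ̃ + u·∇ρ̃ = 0` and `∂_t𝔽 + u·∇𝔽 = (∇u)𝔽` pointwise on
`ℝ³ × I` (for smooth `ρ̃, u, 𝔽`, with `I` an open interval), then
`∂_tG + u·∇G − (∇u)G − G(∇u)ᵀ = ∇u + (∇u)ᵀ` pointwise, stated componentwise. -/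
theorem stmt5 (a b : ℝ)
    (ρ : ℝ → E3 → ℝ) (u : ℝ → E3 → Fin 3 → ℝ) (F : ℝ → E3 → Fin 3 → Fin 3 → ℝ)
    (G : ℝ → E3 → Fin 3 → Fin 3 → ℝ)
    (hρ_smooth : ContDiffOn ℝ (⊤ : ℕ∞) (fun q : E3 × ℝ => ρ q.2 q.1)
      (Set.univ ×ˢ Set.Ioo a b))
    (hu_smooth : ∀ i, ContDiffOn ℝ (⊤ : ℕ∞) (fun q : E3 × ℝ => u q.2 q.1 i)
      (Set.univ ×ˢ Set.Ioo a b))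
    (hF_smooth : ∀ i j, ContDiffOn ℝ (⊤ : ℕ∞) (fun q : E3 × ℝ => F q.2 q.1 i j)
      (Set.univ ×ˢ Set.Ioo a b))
    (htransport : ∀ x : E3, ∀ t ∈ Set.Ioo a b,
      deriv (fun s => ρ s x) t + ∑ k, u t x k * pd k (ρ t) x = 0)
    (hdeform : ∀ x : E3, ∀ t ∈ Set.Ioo a b, ∀ i j,
      deriv (fun s => F s x i j) t + ∑ k, u t x k * pd k (fun y => F t y i j) x
        = ∑ k, pd k (fun y => u t y i) x * F t x k j)
    (hG : ∀ t x i j,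
      G t x i j = ρ t x * (∑ k, F t x i k * F t x j k) - (if i = j then (1:ℝ) else 0)) :
    ∀ x : E3, ∀ t ∈ Set.Ioo a b, ∀ i j,
      deriv (fun s => G s x i j) t + ∑ k, u t x k * pd k (fun y => G t y i j) x
        - ∑ k, pd k (fun y => u t y i) x * G t x k j
        - ∑ k, G t x i k * pd k (fun y => u t y j) x
      = pd j (fun y => u t y i) x + pd i (fun y => u t y j) x := by
  intro x t ht i j
  have hopen : IsOpen ((Set.univ : Set E3) ×ˢ Set.Ioo a b) := isOpen_univ.prod isOpen_Ioo
  have hmem : (x, t) ∈ (Set.univ : Set E3) ×ˢ Set.Ioo a b :=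
    Set.mk_mem_prod (Set.mem_univ x) ht
  have hslice_t : ∀ f : E3 × ℝ → ℝ, ContDiffOn ℝ (⊤ : ℕ∞) f (Set.univ ×ˢ Set.Ioo a b) →
      DifferentiableAt ℝ (fun s => f (x, s)) t := by
    intro f hf
    have h1 : ContDiffAt ℝ (⊤ : ℕ∞) f (x, t) := hf.contDiffAt (hopen.mem_nhds hmem)
    exact (h1.differentiableAt (by simp)).comp t
      ((differentiableAt_const x).prodMk differentiableAt_id)
  have hslice_x : ∀ f : E3 × ℝ → ℝ, ContDiffOn ℝ (⊤ : ℕ∞) f (Set.univ ×ˢ Set.Ioo a b) →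
      DifferentiableAt ℝ (fun y => f (y, t)) x := by
    intro f hf
    have h1 : ContDiffAt ℝ (⊤ : ℕ∞) f (x, t) := hf.contDiffAt (hopen.mem_nhds hmem)
    exact (h1.differentiableAt (by simp)).comp x
      (differentiableAt_id.prodMk (differentiableAt_const t))
  have hρt : DifferentiableAt ℝ (fun s => ρ s x) t := hslice_t _ hρ_smooth
  have hρx : DifferentiableAt ℝ (fun y => ρ t y) x := hslice_x _ hρ_smooth
  have hFt : ∀ p q, DifferentiableAt ℝ (fun s => F s x p q) t :=
    fun p q => hslice_t _ (hF_smooth p q)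
  have hFx : ∀ p q, DifferentiableAt ℝ (fun y => F t y p q) x :=
    fun p q => hslice_x _ (hF_smooth p q)
  -- time derivative of G
  have hderiv : deriv (fun s => G s x i j) t
      = deriv (fun s => ρ s x) t * (∑ k, F t x i k * F t x j k)
        + ρ t x * ∑ k, (deriv (fun s => F s x i k) t * F t x j k
            + F t x i k * deriv (fun s => F s x j k) t) := by
    have hfun : (fun s => G s x i j)
        = fun s => ρ s x * (∑ k, F s x i k * F s x j k) - (if i = j then (1:ℝ) else 0) :=
      funext fun s => hG s x i j
    have hS : DifferentiableAt ℝ (fun s => ∑ k, F s x i k * F s x j k) t :=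
      DifferentiableAt.fun_sum fun k _ => (hFt i k).fun_mul (hFt j k)
    rw [hfun, deriv_sub_const, deriv_fun_mul hρt hS]
    congr 1
    congr 1
    rw [deriv_fun_sum fun k _ => (hFt i k).fun_mul (hFt j k)]
    exact Finset.sum_congr rfl fun k _ => deriv_fun_mul (hFt i k) (hFt j k)
  -- spatial derivatives of G
  have hpdG : ∀ k, pd k (fun y => G t y i j) x
      = pd k (ρ t) x * (∑ m, F t x i m * F t x j m)
        + ρ t x * ∑ m, (pd k (fun y => F t y i m) x * F t x j m
            + F t x i m * pd k (fun y => F t y j m) x) := by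
    intro k
    have hfun : (fun y => G t y i j)
        = fun y => ρ t y * (∑ m, F t y i m * F t y j m) - (if i = j then (1:ℝ) else 0) :=
      funext fun y => hG t y i j
    have hS : DifferentiableAt ℝ (fun y => ∑ m, F t y i m * F t y j m) x :=
      DifferentiableAt.fun_sum fun m _ => (hFx i m).fun_mul (hFx j m)
    rw [hfun, pd_sub_const, pd_mul _ _ _ _ hρx hS]
    congr 1
    congr 1
    rw [pd_sum _ _ _ _ fun m _ => (hFx i m).fun_mul (hFx j m)]
    exact Finset.sum_congr rfl fun m _ => pd_mul _ _ _ _ (hFx i m) (hFx j m)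
  -- solved transport and deformation equations
  have hT : deriv (fun s => ρ s x) t = -∑ k, u t x k * pd k (ρ t) x := by
    have := htransport x t ht
    linarith
  have hD : ∀ p q, deriv (fun s => F s x p q) t
      = ∑ k, pd k (fun y => u t y p) x * F t x k q
        - ∑ k, u t x k * pd k (fun y => F t y p q) x := by
    intro p q
    have := hdeform x t ht p q
    linarith
  rw [hderiv]
  simp only [hpdG]
  simp only [hG, hD, hT]
  simp only [mul_sub, sub_mul, Finset.sum_sub_distrib, mul_ite, mul_one, mul_zero,
    ite_mul, one_mul, zero_mul, Finset.sum_ite_eq, Finset.sum_ite_eq', Finset.mem_univ,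
    if_true]
  simp only [Fin.sum_univ_three]
  ring
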